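/- Let b₁,…,b_n be a normalized-at-infinity integral basis of O_K over ℂ[x] with exponents d₁,…,d_n (so x^{-d_i}b_i ∈ O_∞ with residues linearly independent modulo (1/x)O_∞). Then for any positive integer d, the set B_d = { x^j b_i : 0 ≤ j ≤ d − d_i, 1 ≤ i ≤ n } is a basis of the ℂ-vector space O_K ∩ x^d O_∞. -/

import Mathlib

noncomputable section
open scoped Classical
open Polynomial
set_option linter.unusedSectionVars false
set_option linter.unusedVariables false

variable (K : Type*) [Field K] [Algebra (RatFunc ℂ) K] [Algebra (Polynomial ℂ) K]
  [IsScalarTower (Polynomial ℂ) (RatFunc ℂ) K] [Algebra ℂ K]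
  [IsScalarTower ℂ (RatFunc ℂ) K] [FiniteDimensional (RatFunc ℂ) K]

/-- The ring `R_∞` of rational functions with no pole at `x = ∞`, i.e. the valuation
subring of the valuation at infinity on `ℂ(x)`. -/
def Rinf : Subring (RatFunc ℂ) := ((FunctionField.inftyValuation ℂ).valuationSubring).toSubring

instance : Algebra (Rinf) K :=
  ((algebraMap (RatFunc ℂ) K).comp (SubringClass.subtype Rinf)).toAlgebra

/-- `O_K`: the integral closure of `ℂ[x]` in `K`. -/
def OK : Subalgebra (Polynomial ℂ) K := integralClosure (Polynomial ℂ) K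

/-- `O_∞`: the integral closure of `R_∞` in `K`. -/
def Oinf : Subalgebra (Rinf) K := integralClosure (Rinf) K

/-- The element `x ∈ K`, the image of the variable of `ℂ(x)`. -/
def xK : K := algebraMap (RatFunc ℂ) K RatFunc.X

/-- `β ∈ x^e O_∞`. -/
def memXpowOinf (e : ℤ) (β : K) : Prop := ∃ γ ∈ Oinf K, β = xK K ^ e * γ

theorem mem_Rinf (e : ℤ) (P : ℂ[X]) (h : P ≠ 0 → (P.natDegree : ℤ) + e ≤ 0) :
    (RatFunc.X ^ e * algebraMap ℂ[X] (RatFunc ℂ) P) ∈ Rinf := by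
  by_cases hP : P = 0
  · simp only [hP, map_zero, mul_zero]; exact zero_mem _
  · have hP' : algebraMap ℂ[X] (RatFunc ℂ) P ≠ 0 := by simpa using hP
    have : FunctionField.inftyValuation ℂ (RatFunc.X ^ e * algebraMap ℂ[X] (RatFunc ℂ) P) ≤ 1 := by
      rw [map_mul, map_zpow₀]
      show RatFunc.inftyValuation ℂ RatFunc.X ^ e
        * RatFunc.inftyValuation ℂ (algebraMap ℂ[X] (RatFunc ℂ) P) ≤ 1
      rw [RatFunc.inftyValuation.X, RatFunc.inftyValuation_apply,
        RatFunc.inftyValuation.polynomial ℂ hP, ← WithZero.exp_zsmul, ← WithZero.exp_add,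
        ← WithZero.exp_zero, WithZero.exp_le_exp]
      have := h hP
      simp only [smul_eq_mul, mul_one]
      omega
    exact this

theorem xK_eq : xK K = algebraMap (Polynomial ℂ) K Polynomial.X := by
  rw [xK, IsScalarTower.algebraMap_apply (Polynomial ℂ) (RatFunc ℂ) K, RatFunc.algebraMap_X]

theorem xK_ne : xK K ≠ 0 := fun h => RatFunc.X_ne_zero <|
  (algebraMap (RatFunc ℂ) K).injective (h.trans (map_zero _).symm)

theorem xK_zpow (e : ℤ) : xK K ^ e = algebraMap (RatFunc ℂ) K (RatFunc.X ^ e) :=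
  (map_zpow₀ _ _ _).symm

theorem rat_mem_Oinf (f : RatFunc ℂ) (hf : f ∈ Rinf) : algebraMap (RatFunc ℂ) K f ∈ Oinf K :=
  (Oinf K).algebraMap_mem (⟨f, hf⟩ : Rinf)

theorem constC_mem_Oinf (c : ℂ) : algebraMap ℂ K c ∈ Oinf K := by
  rw [IsScalarTower.algebraMap_apply ℂ (RatFunc ℂ) K]
  apply rat_mem_Oinf
  have : algebraMap ℂ (RatFunc ℂ) c = RatFunc.X ^ (0 : ℤ) * algebraMap ℂ[X] (RatFunc ℂ) (Polynomial.C c) := by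
    rw [zpow_zero, one_mul,
      IsScalarTower.algebraMap_apply ℂ ℂ[X] (RatFunc ℂ), Polynomial.algebraMap_eq]
  rw [this]
  exact mem_Rinf 0 _ (fun _ => by simp)

theorem memXpow_zero (e : ℤ) : memXpowOinf K e 0 := ⟨0, zero_mem _, (mul_zero _).symm⟩

theorem memXpow_add {e : ℤ} {β₁ β₂ : K} (h₁ : memXpowOinf K e β₁) (h₂ : memXpowOinf K e β₂) :
    memXpowOinf K e (β₁ + β₂) := by
  obtain ⟨γ₁, hγ₁, rfl⟩ := h₁; obtain ⟨γ₂, hγ₂, rfl⟩ := h₂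
  exact ⟨γ₁ + γ₂, add_mem hγ₁ hγ₂, (mul_add _ _ _).symm⟩

theorem memXpow_smul {e : ℤ} (c : ℂ) {β : K} (h : memXpowOinf K e β) :
    memXpowOinf K e (c • β) := by
  obtain ⟨γ, hγ, rfl⟩ := h
  refine ⟨algebraMap ℂ K c * γ, mul_mem (constC_mem_Oinf K c) hγ, ?_⟩
  rw [Algebra.smul_def]; ring

theorem memXpow_neg {e : ℤ} {β : K} (h : memXpowOinf K e β) : memXpowOinf K e (-β) := by
  simpa using memXpow_smul K (-1 : ℂ) h

theorem memXpow_sub {e : ℤ} {β₁ β₂ : K} (h₁ : memXpowOinf K e β₁) (h₂ : memXpowOinf K e β₂) :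
    memXpowOinf K e (β₁ - β₂) := by
  rw [sub_eq_add_neg]; exact memXpow_add K h₁ (memXpow_neg K h₂)

theorem memXpow_up {e e' : ℤ} (h : e ≤ e') {β : K} (hβ : memXpowOinf K e β) :
    memXpowOinf K e' β := by
  obtain ⟨γ, hγ, rfl⟩ := hβ
  have hm : (RatFunc.X : RatFunc ℂ) ^ (e - e') ∈ Rinf := by
    have := mem_Rinf (e - e') 1 (fun _ => by simp; omega)
    simpa using this
  refine ⟨algebraMap (RatFunc ℂ) K (RatFunc.X ^ (e - e')) * γ,
    mul_mem (rat_mem_Oinf K _ hm) hγ, ?_⟩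
  rw [← xK_zpow, ← mul_assoc, ← zpow_add₀ (xK_ne K)]
  congr 2
  omega

theorem memXpow_zpow_mul {e : ℤ} (k : ℤ) {β : K} (h : memXpowOinf K e β) :
    memXpowOinf K (k + e) (xK K ^ k * β) := by
  obtain ⟨γ, hγ, rfl⟩ := h
  exact ⟨γ, hγ, by rw [zpow_add₀ (xK_ne K), mul_assoc]⟩

theorem memXpow_sum {ι : Type*} {e : ℤ} (s : Finset ι) (f : ι → K)
    (h : ∀ i ∈ s, memXpowOinf K e (f i)) : memXpowOinf K e (∑ i ∈ s, f i) := by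
  classical
  induction s using Finset.induction_on with
  | empty => simpa using memXpow_zero K e
  | insert _ _ hx ih =>
    rw [Finset.sum_insert hx]
    exact memXpow_add K (h _ (Finset.mem_insert_self _ _))
      (ih fun i hi => h i (Finset.mem_insert_of_mem hi))

theorem xK_pow (j : ℕ) : xK K ^ (j : ℤ) = algebraMap ℂ[X] K (Polynomial.X ^ j) := by
  rw [zpow_natCast, xK_eq, map_pow]

theorem algC_eq (a : ℂ) : algebraMap ℂ[X] K (Polynomial.C a) = algebraMap ℂ K a := by
  rw [IsScalarTower.algebraMap_apply ℂ[X] (RatFunc ℂ) K,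
    IsScalarTower.algebraMap_apply ℂ (RatFunc ℂ) K,
    IsScalarTower.algebraMap_apply ℂ ℂ[X] (RatFunc ℂ), Polynomial.algebraMap_eq]

theorem part1
    (n : ℕ) (b : Fin n → K) (hbOK : ∀ i, b i ∈ OK K)
    (hbasis : ∀ β ∈ OK K, ∃! c : Fin n → Polynomial ℂ,
      β = ∑ i, algebraMap (Polynomial ℂ) K (c i) * b i)
    (dd : Fin n → ℤ) (d : ℕ) :
    LinearIndependent ℂ
      (fun p : {p : Fin n × ℕ // (p.2 : ℤ) ≤ (d : ℤ) - dd p.1} =>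
        xK K ^ (p.1.2 : ℤ) * b p.1.1) := by
  rw [linearIndependent_iff']
  intro s g hsum p hp
  set c : Fin n → ℂ[X] :=
    fun i => ∑ q ∈ s, if q.1.1 = i then Polynomial.C (g q) * Polynomial.X ^ q.1.2 else 0
    with hcdef
  have hrep : (0 : K) = ∑ i, algebraMap ℂ[X] K (c i) * b i := by
    rw [← hsum]
    have hterm : ∀ i, algebraMap ℂ[X] K (c i) * b i
        = ∑ q ∈ s, (if q.1.1 = i then g q • (xK K ^ (q.1.2 : ℤ) * b q.1.1) else 0) := by
      intro i
      rw [hcdef, map_sum, Finset.sum_mul]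
      refine Finset.sum_congr rfl fun q _ => ?_
      by_cases h : q.1.1 = i
      · rw [if_pos h, if_pos h, ← h, map_mul, Algebra.smul_def, algC_eq, xK_pow, mul_assoc]
      · rw [if_neg h, if_neg h, map_zero, zero_mul]
    rw [Finset.sum_congr rfl (fun i _ => hterm i), Finset.sum_comm]
    refine Finset.sum_congr rfl fun q _ => ?_
    rw [Finset.sum_ite_eq Finset.univ q.1.1
      (fun _ => g q • (xK K ^ (q.1.2 : ℤ) * b q.1.1)), if_pos (Finset.mem_univ _)]
  obtain ⟨c₀, hc₀, huniq⟩ := hbasis 0 (zero_mem _)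
  have hc1 : c = c₀ := huniq c hrep
  have hc2 : (fun _ : Fin n => (0 : ℂ[X])) = c₀ := huniq _ (by simp)
  have hczero : c = fun _ => 0 := hc1.trans hc2.symm
  have hcoeff : (c p.1.1).coeff p.1.2 = g p := by
    rw [hcdef]
    simp only [Polynomial.finset_sum_coeff, apply_ite (fun r : ℂ[X] => r.coeff p.1.2),
      Polynomial.coeff_zero]
    rw [Finset.sum_eq_single_of_mem p hp]
    · simp [Polynomial.coeff_C_mul, Polynomial.coeff_X_pow]
    · intro q hq hqp
      by_cases h : q.1.1 = p.1.1
      · rw [if_pos h]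
        have : p.1.2 ≠ q.1.2 := by
          intro he
          exact hqp (Subtype.ext (Prod.ext h (he.symm)))
        simp [Polynomial.coeff_C_mul, Polynomial.coeff_X_pow, this]
      · rw [if_neg h]
  rw [hczero] at hcoeff
  simpa using hcoeff.symm

theorem degree_bound
    (n : ℕ) (b : Fin n → K) (dd : Fin n → ℤ)
    (hmemd : ∀ i, memXpowOinf K (dd i) (b i))
    (hindep : ∀ c : Fin n → ℂ,
      (∃ γ ∈ Oinf K, (∑ i, c i • (xK K ^ (-(dd i)) * b i)) = (xK K)⁻¹ * γ) → c = 0)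
    (d : ℕ) (c : Fin n → Polynomial ℂ)
    (hβd : memXpowOinf K (d : ℤ) (∑ i, algebraMap (Polynomial ℂ) K (c i) * b i)) :
    ∀ i, c i ≠ 0 → ((c i).natDegree : ℤ) + dd i ≤ (d : ℤ) := by
  by_contra hcon
  push_neg at hcon
  obtain ⟨i₀, hi₀ne, hi₀d⟩ := hcon
  classical
  set T : Finset (Fin n) := Finset.univ.filter (fun i => c i ≠ 0) with hT
  have hi₀T : i₀ ∈ T := by simp [hT, hi₀ne]
  have hne : (T.image (fun i => ((c i).natDegree : ℤ) + dd i)).Nonempty :=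
    ⟨_, Finset.mem_image_of_mem _ hi₀T⟩
  set m : ℤ := (T.image (fun i => ((c i).natDegree : ℤ) + dd i)).max' hne with hm
  have hdm : (d : ℤ) < m := lt_of_lt_of_le hi₀d <|
    Finset.le_max' (T.image (fun i => ((c i).natDegree : ℤ) + dd i))
      (((c i₀).natDegree : ℤ) + dd i₀) (Finset.mem_image_of_mem _ hi₀T)
  have hle : ∀ i, c i ≠ 0 → ((c i).natDegree : ℤ) + dd i ≤ m := fun i hi =>
    Finset.le_max' (T.image (fun i => ((c i).natDegree : ℤ) + dd i))
      (((c i).natDegree : ℤ) + dd i) (Finset.mem_image_of_mem _ (by simp [hT, hi]))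
  obtain ⟨i₁, hi₁T, hi₁⟩ := Finset.mem_image.mp (Finset.max'_mem _ hne)
  have hi₁ne : c i₁ ≠ 0 := (Finset.mem_filter.mp hi₁T).2
  set cc : Fin n → ℂ := fun i => (c i).coeff (m - dd i).toNat with hccdef
  have hcc₁ : cc i₁ ≠ 0 := by
    have h1 : (m - dd i₁).toNat = (c i₁).natDegree := by omega
    rw [hccdef]
    simpa [h1] using Polynomial.leadingCoeff_ne_zero.mpr hi₁ne
  -- each correction term lies in x⁻¹ O∞
  have hu : ∀ i, memXpowOinf K (-1)
      (cc i • (xK K ^ (-(dd i)) * b i)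
        - xK K ^ (-m) * (algebraMap (Polynomial ℂ) K (c i) * b i)) := by
    intro i
    obtain ⟨γ, hγ, hbi⟩ := hmemd i
    set F : RatFunc ℂ := algebraMap ℂ (RatFunc ℂ) (cc i)
      - RatFunc.X ^ (dd i - m) * algebraMap (Polynomial ℂ) (RatFunc ℂ) (c i) with hF
    have hfactor : cc i • (xK K ^ (-(dd i)) * b i)
        - xK K ^ (-m) * (algebraMap (Polynomial ℂ) K (c i) * b i)
        = algebraMap (RatFunc ℂ) K F * γ := by
      have e1 : xK K ^ (-(dd i)) * (xK K ^ (dd i) * γ) = γ := by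
        rw [← mul_assoc, ← zpow_add₀ (xK_ne K), neg_add_cancel, zpow_zero, one_mul]
      have e2 : xK K ^ (-m) * (algebraMap (Polynomial ℂ) K (c i) * (xK K ^ (dd i) * γ))
          = (xK K ^ (dd i - m) * algebraMap (Polynomial ℂ) K (c i)) * γ := by
        rw [sub_eq_add_neg, zpow_add₀ (xK_ne K), zpow_neg]
        ring
      rw [hbi, e1, e2, hF, map_sub, map_mul, ← xK_zpow,
        ← IsScalarTower.algebraMap_apply ℂ (RatFunc ℂ) K,
        ← IsScalarTower.algebraMap_apply (Polynomial ℂ) (RatFunc ℂ) K,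
        sub_mul, Algebra.smul_def]
    rw [hfactor]
    by_cases hci : c i = 0
    · have hcc0 : cc i = 0 := by rw [hccdef]; simp [hci]
      have hF0 : F = 0 := by rw [hF, hci, hcc0]; simp
      rw [hF0, map_zero, zero_mul]
      exact memXpow_zero K _
    · have hnd : ((c i).natDegree : ℤ) + dd i ≤ m := hle i hci
      set k : ℕ := (m - dd i).toNat with hk
      have hkz : (k : ℤ) = m - dd i := Int.toNat_of_nonneg (by omega)
      set Q : Polynomial ℂ := c i - Polynomial.C (cc i) * Polynomial.X ^ k with hQ
      have hXmul : (RatFunc.X : RatFunc ℂ) ^ (dd i - m) * RatFunc.X ^ k = 1 := by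
        rw [← zpow_natCast (RatFunc.X : RatFunc ℂ) k, ← zpow_add₀ RatFunc.X_ne_zero]
        have h0 : dd i - m + (k : ℤ) = 0 := by omega
        rw [h0, zpow_zero]
      have hFQ : F = - (RatFunc.X ^ (dd i - m) * algebraMap (Polynomial ℂ) (RatFunc ℂ) Q) := by
        rw [hQ, map_sub, mul_sub, neg_sub, hF]
        congr 1
        rw [map_mul, map_pow, RatFunc.algebraMap_X,
          mul_comm (algebraMap (Polynomial ℂ) (RatFunc ℂ) (Polynomial.C (cc i))) _,
          ← mul_assoc, hXmul, one_mul,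
          IsScalarTower.algebraMap_apply ℂ (Polynomial ℂ) (RatFunc ℂ), Polynomial.algebraMap_eq]
      have hQdeg : Q ≠ 0 → ((Q.natDegree : ℤ)) + (dd i - m + 1) ≤ 0 := by
        intro hQne
        have hdeg : Q.natDegree < k := by
          rw [Polynomial.natDegree_lt_iff_degree_lt hQne,
            Polynomial.degree_lt_iff_coeff_zero]
          intro j hj
          rw [hQ]
          simp only [Polynomial.coeff_sub, Polynomial.coeff_C_mul, Polynomial.coeff_X_pow]
          by_cases hjk : j = k
          · subst hjk
            rw [if_pos rfl, mul_one, hccdef]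
            exact sub_self _
          · have hjgt : (c i).natDegree < j := by omega
            rw [Polynomial.coeff_eq_zero_of_natDegree_lt hjgt, if_neg hjk]
            simp
        omega
      have hXF : RatFunc.X ^ (dd i - m + 1) * algebraMap (Polynomial ℂ) (RatFunc ℂ) Q ∈ Rinf :=
        mem_Rinf _ _ (fun h => by have := hQdeg h; omega)
      refine ⟨algebraMap (RatFunc ℂ) K
          (-(RatFunc.X ^ (dd i - m + 1) * algebraMap (Polynomial ℂ) (RatFunc ℂ) Q)) * γ,
        mul_mem (rat_mem_Oinf K _ (neg_mem hXF)) hγ, ?_⟩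
      have hxx : xK K ^ (-1 : ℤ) * xK K ^ (dd i - m + 1) = xK K ^ (dd i - m) := by
        rw [← zpow_add₀ (xK_ne K)]
        congr 1
        omega
      rw [hFQ, map_neg, map_mul, ← xK_zpow, map_neg, map_mul, ← xK_zpow, ← hxx]
      ring
  -- the sum of normalized leading terms lies in x⁻¹ O∞
  have hβm : memXpowOinf K (-1)
      (xK K ^ (-m) * ∑ i, algebraMap (Polynomial ℂ) K (c i) * b i) :=
    memXpow_up K (by omega) (memXpow_zpow_mul K (-m) hβd)
  have hsum_eq : (∑ i, cc i • (xK K ^ (-(dd i)) * b i))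
      = xK K ^ (-m) * (∑ i, algebraMap (Polynomial ℂ) K (c i) * b i)
        + ∑ i, (cc i • (xK K ^ (-(dd i)) * b i)
            - xK K ^ (-m) * (algebraMap (Polynomial ℂ) K (c i) * b i)) := by
    rw [Finset.mul_sum, ← Finset.sum_add_distrib]
    exact Finset.sum_congr rfl fun i _ => by rw [add_sub_cancel]
  have hS : memXpowOinf K (-1) (∑ i, cc i • (xK K ^ (-(dd i)) * b i)) := by
    rw [hsum_eq]
    exact memXpow_add K hβm (memXpow_sum K _ _ (fun i _ => hu i))
  obtain ⟨γS, hγS, hSeq⟩ := hS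
  have hz := hindep cc ⟨γS, hγS, by rw [hSeq, zpow_neg_one]⟩
  exact hcc₁ (congrFun hz i₁)

/-- For a normalized-at-infinity integral basis `b₁,…,b_n` of `O_K` with exponents
`d₁,…,d_n`, and any positive integer `d`, the set
`B_d = { x^j b_i : 0 ≤ j ≤ d − d_i }` is a `ℂ`-basis of `O_K ∩ x^d O_∞`:
it is `ℂ`-linearly independent and spans exactly the elements of `O_K` lying in
`x^d O_∞`. -/
theorem normalized_basis_riemann_roch
    (n : ℕ) (b : Fin n → K) (hbOK : ∀ i, b i ∈ OK K)
    (hbasis : ∀ β ∈ OK K, ∃! c : Fin n → Polynomial ℂ,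
      β = ∑ i, algebraMap (Polynomial ℂ) K (c i) * b i)
    (dd : Fin n → ℤ)
    (hmemd : ∀ i, memXpowOinf K (dd i) (b i))
    (hmin : ∀ i, ∀ e : ℤ, memXpowOinf K e (b i) → dd i ≤ e)
    (hindep : ∀ c : Fin n → ℂ,
      (∃ γ ∈ Oinf K, (∑ i, c i • (xK K ^ (-(dd i)) * b i)) = (xK K)⁻¹ * γ) → c = 0)
    (d : ℕ) (hd : 0 < d) :
    LinearIndependent ℂ
      (fun p : {p : Fin n × ℕ // (p.2 : ℤ) ≤ (d : ℤ) - dd p.1} =>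
        xK K ^ (p.1.2 : ℤ) * b p.1.1) ∧
    ∀ β : K, (β ∈ OK K ∧ memXpowOinf K (d : ℤ) β) ↔
      β ∈ Submodule.span ℂ
        (Set.range (fun p : {p : Fin n × ℕ // (p.2 : ℤ) ≤ (d : ℤ) - dd p.1} =>
          xK K ^ (p.1.2 : ℤ) * b p.1.1)) := by
  refine ⟨part1 K n b hbOK hbasis dd d, fun β => ⟨?_, ?_⟩⟩
  · rintro ⟨hβOK, hβd⟩
    obtain ⟨c, hc, -⟩ := hbasis β hβOK
    have hbound := degree_bound K n b dd hmemd hindep d c (hc ▸ hβd)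
    rw [hc]
    apply Submodule.sum_mem
    intro i _
    have hci : algebraMap (Polynomial ℂ) K (c i) * b i
        = ∑ j ∈ Finset.range ((c i).natDegree + 1),
            (c i).coeff j • (xK K ^ (j : ℤ) * b i) := by
      conv_lhs => rw [Polynomial.as_sum_range_C_mul_X_pow (c i)]
      rw [map_sum, Finset.sum_mul]
      refine Finset.sum_congr rfl fun j _ => ?_
      rw [map_mul, algC_eq, xK_pow, Algebra.smul_def, mul_assoc]
    rw [hci]
    apply Submodule.sum_mem
    intro j _
    by_cases h0 : (c i).coeff j = 0
    · rw [h0, zero_smul]; exact zero_mem _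
    · have hcine : c i ≠ 0 := fun h => h0 (by rw [h]; simp)
      have hjle : j ≤ (c i).natDegree := Polynomial.le_natDegree_of_ne_zero h0
      have hcond : ((j : ℕ) : ℤ) ≤ (d : ℤ) - dd i := by
        have := hbound i hcine; omega
      exact Submodule.smul_mem _ _ (Submodule.subset_span ⟨⟨(i, j), hcond⟩, rfl⟩)
  · intro hβspan
    let M : Submodule ℂ K :=
      { carrier := {β | β ∈ OK K ∧ memXpowOinf K (d : ℤ) β}
        add_mem' := fun h1 h2 => ⟨add_mem h1.1 h2.1, memXpow_add K h1.2 h2.2⟩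
        zero_mem' := ⟨zero_mem _, memXpow_zero K _⟩
        smul_mem' := fun a β h => by
          refine ⟨?_, memXpow_smul K a h.2⟩
          rw [Algebra.smul_def, ← algC_eq]
          exact mul_mem ((OK K).algebraMap_mem _) h.1 }
    have hspan : Submodule.span ℂ
        (Set.range (fun p : {p : Fin n × ℕ // (p.2 : ℤ) ≤ (d : ℤ) - dd p.1} =>
          xK K ^ (p.1.2 : ℤ) * b p.1.1)) ≤ M := by
      rw [Submodule.span_le]
      rintro _ ⟨p, rfl⟩
      dsimp only
      refine ⟨?_, ?_⟩
      · rw [xK_pow]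
        exact mul_mem ((OK K).algebraMap_mem _) (hbOK _)
      · exact memXpow_up K (by have := p.2; omega)
          (memXpow_zpow_mul K (p.1.2 : ℤ) (hmemd p.1.1))
    exact hspan hβspan
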